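/- Let u ∈ C_b²(ℝ). Then for every x ∈ ℝ, (−Δ)^{1/2}u(x) = (1/π) · lim_{ε→0⁺, R→∞} ∫_{ε≤|x−y|≤R} u′(y)/(x−y) dy, i.e. the half-Laplacian of u equals the Hilbert transform of u′ (all non-absolutely-convergent integrals taken as symmetric principal values at the singularity and at infinity). -/

import Mathlib

open Filter MeasureTheory Set

/-- The constant `c_α` in the definition of the fractional Laplacian. -/
noncomputable def cAlpha (α : ℝ) : ℝ :=
  α * 2 ^ (α - 1) * Real.Gamma (1 / 2 + α / 2) / (Real.sqrt Real.pi * Real.Gamma (1 - α / 2))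

/-- `u ∈ C_b²(ℝ)`: twice continuously differentiable with `u`, `u'`, `u''` bounded. -/
def Cb2 (u : ℝ → ℝ) : Prop :=
  ContDiff ℝ 2 u ∧ (∃ M, ∀ x, |u x| ≤ M) ∧ (∃ M, ∀ x, |deriv u x| ≤ M) ∧
    (∃ M, ∀ x, |deriv (deriv u) x| ≤ M)

/-- `I` is the principal value `PV ∫ (u(x) - u(x+y))/|y|^{1+α} dy`, taken as the symmetric
limit `ε → 0⁺` of the integrals over `{ε ≤ |y|}`; so `(−Δ)^{α/2} u (x) = c_α * I`. -/
def fracLapPV (α : ℝ) (u : ℝ → ℝ) (x I : ℝ) : Prop :=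
  Tendsto (fun ε : ℝ => ∫ y in {y : ℝ | ε ≤ |y|}, (u x - u (x + y)) / |y| ^ (1 + α))
    (nhdsWithin 0 (Set.Ioi 0)) (nhds I)

private lemma lip_aux {f : ℝ → ℝ} (hf : Differentiable ℝ f) {M : ℝ}
    (hM : ∀ t, |deriv f t| ≤ M) (a b : ℝ) : |f a - f b| ≤ M * |a - b| := by
  have := convex_univ.norm_image_sub_le_of_norm_deriv_le (f := f)
    (fun t _ => hf t) (fun t _ => hM t) (Set.mem_univ b) (Set.mem_univ a)
  simpa [Real.norm_eq_abs] using this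

theorem stmt2 (u : ℝ → ℝ) (hu : Cb2 u) (x : ℝ) :
    ∃ I J : ℝ, fracLapPV 1 u x I ∧
      Tendsto (fun p : ℝ × ℝ => ∫ y in {y : ℝ | p.1 ≤ |x - y| ∧ |x - y| ≤ p.2},
          deriv u y / (x - y))
        ((nhdsWithin 0 (Set.Ioi 0)) ×ˢ atTop) (nhds J) ∧
      cAlpha 1 * I = 1 / Real.pi * J := by
  obtain ⟨hC, ⟨M₀, hM₀⟩, ⟨M₁, hM₁⟩, ⟨M₂, hM₂⟩⟩ := hu
  have hM₀0 : 0 ≤ M₀ := le_trans (abs_nonneg _) (hM₀ 0)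
  have hM₂0 : 0 ≤ M₂ := le_trans (abs_nonneg _) (hM₂ 0)
  have hd1 : Differentiable ℝ u := hC.differentiable two_ne_zero
  have hC1 : ContDiff ℝ 1 (deriv u) := by
    have h2 : ContDiff ℝ (1 + 1) u := by
      convert hC using 2; norm_num
    exact (contDiff_succ_iff_deriv.mp h2).2.2
  have hd2 : Differentiable ℝ (deriv u) := hC1.differentiable one_ne_zero
  have hcont1 : Continuous (deriv u) := hd2.continuous
  have hcontu : Continuous u := hd1.continuous
  have hLip : ∀ a b, |deriv u a - deriv u b| ≤ M₂ * |a - b| := lip_aux hd2 hM₂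
  set φ : ℝ → ℝ := fun t => 2 * u x - u (x + t) - u (x - t) with hφdef
  have hφcont : Continuous φ := by
    exact (continuous_const.sub (hcontu.comp (continuous_const.add continuous_id))).sub
      (hcontu.comp (continuous_const.sub continuous_id))
  have hφd : ∀ t : ℝ, HasDerivAt φ (deriv u (x - t) - deriv u (x + t)) t := by
    intro t
    have h1 : HasDerivAt (fun t : ℝ => u (x + t)) (deriv u (x + t)) t := by
      simpa [Function.comp_def] using (hd1 (x + t)).hasDerivAt.comp t ((hasDerivAt_id t).const_add x)
    have h2 : HasDerivAt (fun t : ℝ => u (x - t)) (-deriv u (x - t)) t := by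
      simpa [Function.comp_def] using (hd1 (x - t)).hasDerivAt.comp t ((hasDerivAt_id t).const_sub x)
    have h3 := (h1.add h2).const_sub (2 * u x)
    have hfe : φ = fun t => 2 * u x - (u (x + t) + u (x - t)) := by
      funext t; simp [hφdef]; ring
    rw [hfe]
    exact h3.congr_deriv (by ring)
  set g : ℝ → ℝ := fun t => φ t / t ^ 2 with hgdef
  have hgmeas : Measurable g := hφcont.measurable.div (measurable_id.pow_const 2)
  have hφ0 : φ 0 = 0 := by simp [hφdef]; ring
  have hφsq : ∀ t : ℝ, 0 ≤ t → |φ t| ≤ 2 * M₂ * t ^ 2 := by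
    intro t ht
    have hmv := (convex_Icc (0:ℝ) t).norm_image_sub_le_of_norm_hasDerivWithin_le
      (f' := fun s => deriv u (x - s) - deriv u (x + s))
      (fun s _ => (hφd s).hasDerivWithinAt) (C := 2 * M₂ * t) ?_
      (left_mem_Icc.mpr ht) (right_mem_Icc.mpr ht)
    · calc |φ t| = ‖φ t - φ 0‖ := by rw [hφ0, sub_zero, Real.norm_eq_abs]
        _ ≤ 2 * M₂ * t * ‖t - 0‖ := hmv
        _ = 2 * M₂ * t ^ 2 := by
            rw [sub_zero, Real.norm_eq_abs, abs_of_nonneg ht]; ring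
    · intro s hs
      rw [Real.norm_eq_abs]
      have h1 := hLip (x - s) (x + s)
      have habs : |(x - s) - (x + s)| = 2 * s := by
        rw [show (x - s) - (x + s) = -(2*s) by ring, abs_neg, abs_of_nonneg (by linarith [hs.1])]
      rw [habs] at h1
      nlinarith [hs.1, hs.2]
  have hφ4 : ∀ t : ℝ, |φ t| ≤ 4 * M₀ := by
    intro t
    have h₁ := hM₀ x; have h₂ := hM₀ (x + t); have h₃ := hM₀ (x - t)
    obtain ⟨h₁a, h₁b⟩ := abs_le.mp h₁
    obtain ⟨h₂a, h₂b⟩ := abs_le.mp h₂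
    obtain ⟨h₃a, h₃b⟩ := abs_le.mp h₃
    rw [abs_le]
    refine ⟨?_, ?_⟩ <;> simp only [hφdef] <;> linarith
  have hφ4' : ∀ t : ℝ, |φ t| ≤ 4 * M₀ := hφ4
  -- dominating function
  set D : ℝ → ℝ := fun t => if t ≤ 1 then 2 * M₂ else 4 * M₀ / t ^ 2 with hDdef
  have hgD : ∀ t ∈ Ioi (0:ℝ), |g t| ≤ D t := by
    intro t ht
    have ht0 : (0:ℝ) < t := ht
    have ht2 : (0:ℝ) < t ^ 2 := by positivity
    have habs : |g t| = |φ t| / t ^ 2 := by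
      rw [hgdef, abs_div, abs_of_nonneg ht2.le]
    by_cases h1 : t ≤ 1
    · simp only [hDdef, h1, if_true]
      rw [habs, div_le_iff₀ ht2]
      exact le_trans (hφsq t ht0.le) (by nlinarith)
    · simp only [hDdef, h1, if_false]
      rw [habs]
      gcongr
      exact hφ4 t
  have hD0 : ∀ t ∈ Ioi (0:ℝ), 0 ≤ D t := by
    intro t ht
    simp only [hDdef]
    split
    · positivity
    · have ht0 : (0:ℝ) < t := ht
      positivity
  have hDint : IntegrableOn D (Ioi (0:ℝ)) := by
    rw [← Ioc_union_Ioi_eq_Ioi (zero_le_one (α := ℝ))]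
    apply IntegrableOn.union
    · refine ((integrableOn_const_iff (C := 2 * M₂)).mpr
        (Or.inr measure_Ioc_lt_top)).congr_fun ?_ measurableSet_Ioc
      intro t ht
      simp [hDdef, ht.2]
    · have hint : IntegrableOn (fun t : ℝ => 4 * M₀ * t ^ (-2:ℝ)) (Ioi 1) :=
        (integrableOn_Ioi_rpow_of_lt (by norm_num) one_pos).const_mul (4 * M₀)
      refine hint.congr_fun ?_ measurableSet_Ioi
      intro t ht
      have ht1 : (1:ℝ) < t := ht
      have h0 : (0:ℝ) < t := by linarith
      simp only [hDdef, not_le.mpr ht1, if_false]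
      rw [Real.rpow_neg h0.le, show ((2:ℝ) = ((2:ℕ):ℝ)) by norm_num, Real.rpow_natCast,
        div_eq_mul_inv]
  have hg_int : IntegrableOn g (Ioi (0:ℝ)) := by
    refine Integrable.mono hDint hgmeas.aestronglyMeasurable ?_
    rw [ae_restrict_iff' measurableSet_Ioi]
    refine ae_of_all _ fun t ht => ?_
    rw [Real.norm_eq_abs, Real.norm_eq_abs]
    exact (hgD t ht).trans (le_abs_self _)
  set I : ℝ := ∫ t in Ioi (0:ℝ), g t with hIdef
  have keyB : Tendsto (fun ε : ℝ => ∫ t in Ioi (0:ℝ), (Ici ε).indicator g t)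
      (nhdsWithin 0 (Set.Ioi 0)) (nhds I) := by
    apply tendsto_integral_filter_of_dominated_convergence D
    · exact Eventually.of_forall fun ε =>
        (hgmeas.indicator measurableSet_Ici).aestronglyMeasurable
    · refine Eventually.of_forall fun ε => ?_
      rw [ae_restrict_iff' measurableSet_Ioi]
      refine ae_of_all _ fun t ht => ?_
      refine le_trans (norm_indicator_le_norm_self g t) ?_
      rw [Real.norm_eq_abs]
      exact hgD t ht
    · exact hDint
    · rw [ae_restrict_iff' measurableSet_Ioi]
      refine ae_of_all _ fun t ht => ?_
      have hmem : Ioo (0:ℝ) t ∈ nhdsWithin (0:ℝ) (Set.Ioi 0) :=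
        Ioo_mem_nhdsGT_of_mem ⟨le_refl 0, ht⟩
      refine Tendsto.congr' ?_ (tendsto_const_nhds (x := g t))
      filter_upwards [hmem] with ε hε
      exact (indicator_of_mem (mem_Ici.mpr hε.2.le) g).symm
  have limB : Tendsto (fun ε : ℝ => ∫ t in Ici ε, g t)
      (nhdsWithin 0 (Set.Ioi 0)) (nhds I) := by
    refine Tendsto.congr' ?_ keyB
    filter_upwards [self_mem_nhdsWithin] with ε hε
    rw [integral_indicator measurableSet_Ici, Measure.restrict_restrict measurableSet_Ici]
    have hss : Ici ε ∩ Ioi 0 = Ici ε :=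
      inter_eq_left.mpr fun t ht => mem_Ioi.mpr (lt_of_lt_of_le (mem_Ioi.mp hε) ht)
    rw [hss]
  -- the integrand of the fractional Laplacian
  set f₁ : ℝ → ℝ := fun y => (u x - u (x + y)) / y ^ 2 with hf₁def
  have hexp : ∀ y : ℝ, (u x - u (x + y)) / |y| ^ ((1:ℝ) + 1) = f₁ y := by
    intro y
    rw [hf₁def, show ((1:ℝ) + 1) = ((2:ℕ):ℝ) by norm_num, Real.rpow_natCast, sq_abs]
  have hf₁meas : Measurable f₁ :=
    (measurable_const.sub (hcontu.measurable.comp (measurable_const.add measurable_id))).div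
      (measurable_id.pow_const 2)
  have hf₁bound : ∀ y : ℝ, |f₁ y| ≤ 2 * M₀ / y ^ 2 := by
    intro y
    rcases eq_or_ne y 0 with rfl | hy
    · simp [hf₁def]
    · have hy2 : (0:ℝ) < y ^ 2 := by positivity
      rw [hf₁def, abs_div, abs_of_nonneg hy2.le]
      gcongr
      have h₁ := abs_le.mp (hM₀ x); have h₂ := abs_le.mp (hM₀ (x + y))
      rw [abs_le]; constructor <;> linarith
  have hbint : ∀ ε : ℝ, 0 < ε → IntegrableOn (fun y : ℝ => 2 * M₀ / y ^ 2) (Ioi ε) := by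
    intro ε hε
    have hint : IntegrableOn (fun t : ℝ => 2 * M₀ * t ^ (-2:ℝ)) (Ioi ε) :=
      (integrableOn_Ioi_rpow_of_lt (by norm_num) hε).const_mul (2 * M₀)
    refine hint.congr_fun ?_ measurableSet_Ioi
    intro t ht
    have h0 : (0:ℝ) < t := lt_trans hε ht
    show 2 * M₀ * t ^ (-2:ℝ) = 2 * M₀ / t ^ 2
    rw [Real.rpow_neg h0.le, show ((2:ℝ) = ((2:ℕ):ℝ)) by norm_num, Real.rpow_natCast,
      div_eq_mul_inv]
  have hf₁aux : ∀ (f : ℝ → ℝ), Measurable f → (∀ y, |f y| ≤ 2 * M₀ / y ^ 2) →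
      ∀ ε : ℝ, 0 < ε → IntegrableOn f (Ici ε) := by
    intro f hfm hfb ε hε
    rw [integrableOn_Ici_iff_integrableOn_Ioi]
    refine Integrable.mono (hbint ε hε) hfm.aestronglyMeasurable ?_
    refine ae_of_all _ fun t => ?_
    rw [Real.norm_eq_abs, Real.norm_eq_abs]
    exact (hfb t).trans (le_abs_self _)
  have hf₁intIci : ∀ ε : ℝ, 0 < ε → IntegrableOn f₁ (Ici ε) :=
    hf₁aux f₁ hf₁meas hf₁bound
  have hf₁negIci : ∀ ε : ℝ, 0 < ε → IntegrableOn (fun y => f₁ (-y)) (Ici ε) := by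
    refine hf₁aux _ (hf₁meas.comp measurable_neg) fun y => ?_
    have := hf₁bound (-y)
    simpa using this
  have hf₁intIic : ∀ ε : ℝ, 0 < ε → IntegrableOn f₁ (Iic (-ε)) := by
    intro ε hε
    have hpre : (fun y : ℝ => -y) ⁻¹' (Iic (-ε)) = Ici ε := by
      ext t; simp [neg_le]
    have hiff := MeasurePreserving.integrableOn_comp_preimage
      (Measure.measurePreserving_neg (volume : Measure ℝ))
      (Homeomorph.neg ℝ).measurableEmbedding (f := f₁) (s := Iic (-ε))
    rw [hpre] at hiff
    exact hiff.mp (hf₁negIci ε hε)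
  have eqB : ∀ ε : ℝ, 0 < ε →
      (∫ y in {y : ℝ | ε ≤ |y|}, f₁ y) = ∫ t in Ici ε, g t := by
    intro ε hε
    have hset : {y : ℝ | ε ≤ |y|} = Iic (-ε) ∪ Ici ε := by
      ext y
      simp only [mem_setOf_eq, mem_union, mem_Iic, mem_Ici, le_abs, le_neg]
      tauto
    have hdisj : Disjoint (Iic (-ε)) (Ici ε) :=
      Iic_disjoint_Ici.mpr (by linarith)
    rw [hset, setIntegral_union hdisj measurableSet_Ici (hf₁intIic ε hε) (hf₁intIci ε hε)]
    have h1 : (∫ y in Iic (-ε), f₁ y) = ∫ y in Ioi ε, f₁ (-y) := by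
      have := integral_comp_neg_Iic (-ε) (fun y => f₁ (-y))
      simp only [neg_neg] at this
      rw [← this]
    rw [h1, ← integral_Ici_eq_integral_Ioi,
      ← integral_add (hf₁negIci ε hε) (hf₁intIci ε hε)]
    refine setIntegral_congr_fun measurableSet_Ici fun t ht => ?_
    simp only [hf₁def, hgdef, hφdef, neg_neg, neg_sq, ← sub_eq_add_neg]
    rw [← add_div]
    congr 1
    ring
  have fracGoal : fracLapPV 1 u x I := by
    unfold fracLapPV
    refine Tendsto.congr' ?_ limB
    filter_upwards [self_mem_nhdsWithin] with ε hε
    rw [← eqB ε hε]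
    exact setIntegral_congr_fun (measurableSet_le measurable_const measurable_id.abs)
      fun y _ => (hexp y).symm
  -- part D : the Hilbert transform side
  set h : ℝ → ℝ := fun t => (deriv u (x - t) - deriv u (x + t)) / t with hhdef
  have hhcontOn : ContinuousOn h (Ioi (0:ℝ)) := by
    refine ContinuousOn.div ?_ continuousOn_id fun t ht => ne_of_gt ht
    exact ((hcont1.comp (continuous_const.sub continuous_id)).sub
      (hcont1.comp (continuous_const.add continuous_id))).continuousOn
  have hgcontOn : ContinuousOn g (Ioi (0:ℝ)) := by
    refine ContinuousOn.div hφcont.continuousOn (continuous_pow 2).continuousOn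
      fun t ht => ?_
    have : (0:ℝ) < t := ht
    positivity
  set Φ : ℝ → ℝ := fun t => -φ t / t with hΦdef
  have hΦd : ∀ t : ℝ, t ≠ 0 → HasDerivAt Φ (g t - h t) t := by
    intro t ht
    have h1 : HasDerivAt (fun s => -φ s) (-(deriv u (x - t) - deriv u (x + t))) t :=
      (hφd t).neg
    have h2 := h1.div (hasDerivAt_id t) ht
    have : Φ = fun s => -φ s / id s := rfl
    rw [this]
    refine h2.congr_deriv ?_
    simp only [hgdef, hhdef, id]
    field_simp
    ring
  have ibp : ∀ ε R : ℝ, 0 < ε → ε ≤ R →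
      (∫ t in ε..R, h t) = (∫ t in ε..R, g t) + φ R / R - φ ε / ε := by
    intro ε R hε hεR
    have hsub : uIcc ε R ⊆ Ioi (0:ℝ) := by
      rw [uIcc_of_le hεR]
      exact fun t htt => lt_of_lt_of_le hε htt.1
    have hgi : IntervalIntegrable g volume ε R :=
      (hgcontOn.mono hsub).intervalIntegrable
    have hhi : IntervalIntegrable h volume ε R :=
      (hhcontOn.mono hsub).intervalIntegrable
    have hft := intervalIntegral.integral_eq_sub_of_hasDerivAt
      (f := Φ) (f' := fun t => g t - h t)
      (fun t htt => hΦd t (ne_of_gt (hsub htt))) (hgi.sub hhi)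
    rw [intervalIntegral.integral_sub hgi hhi] at hft
    have hR0 : R ≠ 0 := ne_of_gt (lt_of_lt_of_le hε hεR)
    have hε0 : ε ≠ 0 := ne_of_gt hε
    simp only [hΦdef, neg_div] at hft
    linarith [hft]
  have eqD : ∀ ε R : ℝ, 0 < ε → ε ≤ R →
      (∫ y in {y : ℝ | ε ≤ |x - y| ∧ |x - y| ≤ R}, deriv u y / (x - y)) =
        ∫ t in ε..R, h t := by
    intro ε R hε hεR
    set f₂ : ℝ → ℝ := fun y => deriv u y / (x - y) with hf₂def
    have hset : {y : ℝ | ε ≤ |x - y| ∧ |x - y| ≤ R} =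
        Icc (x - R) (x - ε) ∪ Icc (x + ε) (x + R) := by
      ext y
      simp only [mem_setOf_eq, mem_union, mem_Icc]
      constructor
      · rintro ⟨hy1, hy2⟩
        rcases le_or_gt 0 (x - y) with hc | hc
        · left; rw [abs_of_nonneg hc] at hy1 hy2; constructor <;> linarith
        · right; rw [abs_of_neg hc] at hy1 hy2; constructor <;> linarith
      · rintro (⟨hy1, hy2⟩ | ⟨hy1, hy2⟩)
        · rw [abs_of_nonneg (by linarith)]; constructor <;> linarith
        · rw [abs_of_nonpos (by linarith)]; constructor <;> linarith
    have hint1 : IntegrableOn f₂ (Icc (x - R) (x - ε)) := by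
      apply ContinuousOn.integrableOn_Icc
      refine ContinuousOn.div hcont1.continuousOn
        (continuous_const.sub continuous_id).continuousOn fun y hy => ?_
      have : y ≤ x - ε := hy.2
      intro h0
      have h0' : x - y = 0 := h0
      linarith
    have hint2 : IntegrableOn f₂ (Icc (x + ε) (x + R)) := by
      apply ContinuousOn.integrableOn_Icc
      refine ContinuousOn.div hcont1.continuousOn
        (continuous_const.sub continuous_id).continuousOn fun y hy => ?_
      have : x + ε ≤ y := hy.1
      intro h0
      have h0' : x - y = 0 := h0
      linarith
    have hdisj : Disjoint (Icc (x - R) (x - ε)) (Icc (x + ε) (x + R)) := by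
      apply Set.disjoint_left.mpr
      rintro y ⟨_, hy2⟩ ⟨hy3, _⟩
      linarith
    rw [hset, setIntegral_union hdisj measurableSet_Icc hint1 hint2]
    have c1 : (∫ y in Icc (x - R) (x - ε), f₂ y) = ∫ y in (x - R)..(x - ε), f₂ y := by
      rw [integral_Icc_eq_integral_Ioc, intervalIntegral.integral_of_le (by linarith)]
    have c2 : (∫ y in Icc (x + ε) (x + R), f₂ y) = ∫ y in (x + ε)..(x + R), f₂ y := by
      rw [integral_Icc_eq_integral_Ioc, intervalIntegral.integral_of_le (by linarith)]
    have s1 : (∫ y in (x - R)..(x - ε), f₂ y) = ∫ t in ε..R, deriv u (x - t) / t := by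
      have hs := intervalIntegral.integral_comp_sub_left
        (a := x - R) (b := x - ε) (fun t => deriv u (x - t) / t) x
      simp only [sub_sub_cancel] at hs
      rw [← hs]
    have s2 : (∫ y in (x + ε)..(x + R), f₂ y) = ∫ t in (-R)..(-ε), deriv u (x - t) / t := by
      have hs := intervalIntegral.integral_comp_sub_left
        (a := x + ε) (b := x + R) (fun t => deriv u (x - t) / t) x
      simp only [sub_sub_cancel, show x - (x + R) = -R by ring,
        show x - (x + ε) = -ε by ring] at hs
      rw [← hs]
    have s3 : (∫ t in (-R)..(-ε), deriv u (x - t) / t) =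
        ∫ t in ε..R, deriv u (x + t) / (-t) := by
      have hs := intervalIntegral.integral_comp_neg (a := ε) (b := R)
        (fun t => deriv u (x - t) / t)
      rw [← hs]
      congr 1
      funext t
      rw [sub_neg_eq_add]
    have hi1 : IntervalIntegrable (fun t => deriv u (x - t) / t) volume ε R := by
      apply ContinuousOn.intervalIntegrable
      refine ContinuousOn.div
        ((hcont1.comp (continuous_const.sub continuous_id)).continuousOn)
        continuousOn_id fun t htt => ?_
      have : (0:ℝ) < t := lt_of_lt_of_le hε (by rw [uIcc_of_le hεR] at htt; exact htt.1)
      exact ne_of_gt this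
    have hi2 : IntervalIntegrable (fun t => deriv u (x + t) / (-t)) volume ε R := by
      apply ContinuousOn.intervalIntegrable
      refine ContinuousOn.div
        ((hcont1.comp (continuous_const.add continuous_id)).continuousOn)
        continuousOn_id.neg fun t htt => ?_
      have : (0:ℝ) < t := lt_of_lt_of_le hε (by rw [uIcc_of_le hεR] at htt; exact htt.1)
      simpa using ne_of_gt this
    rw [c1, c2, s1, s2, s3, ← intervalIntegral.integral_add hi1 hi2]
    congr 1
    funext t
    rw [hhdef, div_neg, ← sub_eq_add_neg, div_sub_div_same]
  -- limit of the symmetric truncated integrals of g, jointly in (ε, R)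
  have keyD : Tendsto (fun p : ℝ × ℝ => ∫ t in Ioi (0:ℝ), (Ioc p.1 p.2).indicator g t)
      ((nhdsWithin 0 (Set.Ioi 0)) ×ˢ atTop) (nhds I) := by
    apply tendsto_integral_filter_of_dominated_convergence D
    · exact Eventually.of_forall fun p =>
        (hgmeas.indicator measurableSet_Ioc).aestronglyMeasurable
    · refine Eventually.of_forall fun p => ?_
      rw [ae_restrict_iff' measurableSet_Ioi]
      refine ae_of_all _ fun t ht => ?_
      refine le_trans (norm_indicator_le_norm_self g t) ?_
      rw [Real.norm_eq_abs]
      exact hgD t ht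
    · exact hDint
    · rw [ae_restrict_iff' measurableSet_Ioi]
      refine ae_of_all _ fun t ht => ?_
      have hmem1 : Ioo (0:ℝ) t ∈ nhdsWithin (0:ℝ) (Set.Ioi 0) :=
        Ioo_mem_nhdsGT_of_mem ⟨le_refl 0, ht⟩
      have hmem : ∀ᶠ p : ℝ × ℝ in (nhdsWithin 0 (Set.Ioi 0)) ×ˢ atTop,
          p.1 ∈ Ioo (0:ℝ) t ∧ t ≤ p.2 :=
        Filter.Eventually.prod_mk (eventually_mem_set.mpr hmem1) (eventually_ge_atTop t)
      refine Tendsto.congr' ?_ (tendsto_const_nhds (x := g t))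
      filter_upwards [hmem] with p hp
      exact (indicator_of_mem (mem_Ioc.mpr ⟨hp.1.2, hp.2⟩) g).symm
  have hevent : ∀ᶠ p : ℝ × ℝ in (nhdsWithin 0 (Set.Ioi 0)) ×ˢ atTop,
      0 < p.1 ∧ p.1 ≤ 1 ∧ 1 ≤ p.2 := by
    have hmem1 : Ioc (0:ℝ) 1 ∈ nhdsWithin (0:ℝ) (Set.Ioi 0) :=
      Ioc_mem_nhdsGT_of_mem ⟨le_refl 0, one_pos⟩
    filter_upwards [Filter.Eventually.prod_mk (eventually_mem_set.mpr hmem1) (eventually_ge_atTop (1:ℝ))]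
      with p hp
    exact ⟨hp.1.1, hp.1.2, hp.2⟩
  have limD1 : Tendsto (fun p : ℝ × ℝ => ∫ t in p.1..p.2, g t)
      ((nhdsWithin 0 (Set.Ioi 0)) ×ˢ atTop) (nhds I) := by
    refine Tendsto.congr' ?_ keyD
    filter_upwards [hevent] with p hp
    obtain ⟨hp1, hp2, hp3⟩ := hp
    rw [integral_indicator measurableSet_Ioc, Measure.restrict_restrict measurableSet_Ioc]
    have hss : Ioc p.1 p.2 ∩ Ioi 0 = Ioc p.1 p.2 :=
      inter_eq_left.mpr fun t htt => lt_trans hp1 htt.1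
    rw [hss, intervalIntegral.integral_of_le (by linarith)]
  have tail1 : Tendsto (fun p : ℝ × ℝ => φ p.2 / p.2)
      ((nhdsWithin 0 (Set.Ioi 0)) ×ˢ atTop) (nhds 0) := by
    have h0 : Tendsto (fun R : ℝ => φ R / R) atTop (nhds 0) := by
      apply squeeze_zero_norm' (a := fun R : ℝ => 4 * M₀ / R)
      · filter_upwards [eventually_ge_atTop (1:ℝ)] with R hR
        rw [Real.norm_eq_abs, abs_div, abs_of_nonneg (by linarith : (0:ℝ) ≤ R)]
        gcongr
        exact hφ4 R
      · simpa using tendsto_const_nhds.div_atTop (tendsto_id (α := ℝ))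
    exact h0.comp tendsto_snd
  have tail2 : Tendsto (fun p : ℝ × ℝ => φ p.1 / p.1)
      ((nhdsWithin 0 (Set.Ioi 0)) ×ˢ atTop) (nhds 0) := by
    have h0 : Tendsto (fun ε : ℝ => φ ε / ε) (nhdsWithin 0 (Set.Ioi 0)) (nhds 0) := by
      apply squeeze_zero_norm' (a := fun ε : ℝ => 2 * M₂ * ε)
      · filter_upwards [self_mem_nhdsWithin] with ε hε
        have hε0 : (0:ℝ) < ε := hε
        rw [Real.norm_eq_abs, abs_div, abs_of_nonneg hε0.le, div_le_iff₀ hε0]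
        calc |φ ε| ≤ 2 * M₂ * ε ^ 2 := hφsq ε hε0.le
          _ = 2 * M₂ * ε * ε := by ring
      · have : Tendsto (fun ε : ℝ => 2 * M₂ * ε) (nhds 0) (nhds 0) := by
          simpa [Pi.mul_def] using (continuous_const.mul continuous_id).tendsto (0:ℝ)
        exact this.mono_left nhdsWithin_le_nhds
    exact h0.comp tendsto_fst
  have limD : Tendsto (fun p : ℝ × ℝ => ∫ y in {y : ℝ | p.1 ≤ |x - y| ∧ |x - y| ≤ p.2},
      deriv u y / (x - y)) ((nhdsWithin 0 (Set.Ioi 0)) ×ˢ atTop) (nhds I) := by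
    have hcomb : Tendsto (fun p : ℝ × ℝ =>
        ((∫ t in p.1..p.2, g t) + φ p.2 / p.2) - φ p.1 / p.1)
        ((nhdsWithin 0 (Set.Ioi 0)) ×ˢ atTop) (nhds ((I + 0) - 0)) :=
      (limD1.add tail1).sub tail2
    rw [add_zero, sub_zero] at hcomb
    refine Tendsto.congr' ?_ hcomb
    filter_upwards [hevent] with p hp
    obtain ⟨hp1, hp2, hp3⟩ := hp
    have hpR : p.1 ≤ p.2 := le_trans hp2 hp3
    rw [eqD p.1 p.2 hp1 hpR, ibp p.1 p.2 hp1 hpR]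
  have hcA : cAlpha 1 = 1 / Real.pi := by
    rw [show cAlpha 1 = 1 * 2 ^ ((1:ℝ) - 1) * Real.Gamma (1 / 2 + 1 / 2) /
      (Real.sqrt Real.pi * Real.Gamma (1 - 1 / 2)) from rfl]
    norm_num [Real.Gamma_one, Real.Gamma_one_half_eq,
      Real.mul_self_sqrt Real.pi_pos.le]
  exact ⟨I, I, fracGoal, limD, by rw [hcA]⟩
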